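/- Let F₁, …, F_t ⊆ P([n]) be families that are cross free of a matching (i.e., there are no pairwise disjoint sets A₁ ∈ F₁, …, A_t ∈ F_t), and let p₁, …, p_t ∈ (0,1) with p₁ + ⋯ + p_t ≤ 1. Then Σ_{i=1}^t μ_{p_i}(F_i) ≤ t − 1. -/
import Mathlib


open Finset

/-- The `p`-biased measure of a family of subsets of `Fin n`. -/
def biasedMu (n : ℕ) (p : ℝ) (F : Finset (Finset (Fin n))) : ℝ :=
  ∑ A ∈ F, p ^ A.card * (1 - p) ^ (n - A.card)

theorem stmt1 (n t : ℕ) (F : Fin t → Finset (Finset (Fin n))) (p : Fin t → ℝ)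
    (hp : ∀ i, p i ∈ Set.Ioo (0:ℝ) 1) (hsum : ∑ i, p i ≤ 1)
    (hcross : ¬ ∃ A : Fin t → Finset (Fin n), (∀ i, A i ∈ F i) ∧
      ∀ i j, i ≠ j → Disjoint (A i) (A j)) :
    ∑ i, biasedMu n (p i) (F i) ≤ (t : ℝ) - 1 := by
  -- t = 0 is contradictory
  rcases Nat.eq_zero_or_pos t with ht0 | ht0
  · exfalso
    apply hcross
    subst ht0
    exact ⟨fun i => i.elim0, fun i => i.elim0, fun i => i.elim0⟩
  -- set up the coloring measure
  set q : ℝ := 1 - ∑ i, p i with hqdef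
  have hq0 : 0 ≤ q := by simp [hqdef]; linarith
  set w : Option (Fin t) → ℝ := fun o => o.elim q p with hwdef
  have hw0 : ∀ o, 0 ≤ w o := by rintro (_ | i)
                                · exact hq0
                                · exact (hp i).1.le
  have hwsum : ∑ o : Option (Fin t), w o = 1 := by
    rw [Fintype.sum_option]
    simp [hwdef, hqdef]
  set W : (Fin n → Option (Fin t)) → ℝ := fun c => ∏ x, w (c x) with hWdef
  have hW0 : ∀ c, 0 ≤ W c := fun c => Finset.prod_nonneg fun x _ => hw0 _
  have hWsum : ∑ c : Fin n → Option (Fin t), W c = 1 := by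
    rw [hWdef, ← Fintype.prod_sum (fun (_ : Fin n) (o : Option (Fin t)) => w o)]
    simp [hwsum]
  -- fibers
  set fib : (Fin n → Option (Fin t)) → Fin t → Finset (Fin n) :=
    fun c i => univ.filter (fun x => c x = some i) with hfibdef
  have hfibdisj : ∀ c, ∀ i j : Fin t, i ≠ j → Disjoint (fib c i) (fib c j) := by
    intro c i j hij
    rw [Finset.disjoint_left]
    intro x hxi hxj
    simp only [hfibdef, mem_filter] at hxi hxj
    exact hij (by rw [hxi.2] at hxj; exact Option.some.inj hxj.2)
  -- marginal computation
  have key : ∀ i, biasedMu n (p i) (F i)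
      = ∑ c : Fin n → Option (Fin t), (if fib c i ∈ F i then W c else 0) := by
    intro i
    have hA : ∀ A ∈ F i, p i ^ A.card * (1 - p i) ^ (n - A.card)
        = ∑ c : Fin n → Option (Fin t), (if fib c i = A then W c else 0) := by
      intro A _
      -- per-element weight
      set g : Fin n → Option (Fin t) → ℝ := fun x o =>
        if x ∈ A then (if o = some i then p i else 0)
        else (if o = some i then 0 else w o) with hgdef
      have hgsum : ∀ x, ∑ o : Option (Fin t), g x o = if x ∈ A then p i else 1 - p i := by
        intro x
        by_cases hx : x ∈ A
        · simp [hgdef, hx]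
        · simp only [hgdef, hx, if_false]
          have : ∑ o : Option (Fin t), (if o = some i then 0 else w o)
              = ∑ o : Option (Fin t), (w o - if o = some i then w o else 0) := by
            apply Finset.sum_congr rfl
            intro o _
            by_cases ho : o = some i <;> simp [ho]
          rw [this, Finset.sum_sub_distrib, hwsum, Finset.sum_ite_eq' univ (some i) w]
          simp [hwdef]
      have hgprod : ∀ c : Fin n → Option (Fin t),
          ∏ x, g x (c x) = if fib c i = A then W c else 0 := by
        intro c
        by_cases hc : fib c i = A
        · rw [if_pos hc, hWdef]
          apply Finset.prod_congr rfl
          intro x _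
          have hx : x ∈ A ↔ c x = some i := by
            rw [← hc]; simp [hfibdef]
          by_cases hxa : x ∈ A
          · have := hx.mp hxa
            simp [hgdef, hxa, this, hwdef]
          · have : ¬ c x = some i := fun h => hxa (hx.mpr h)
            simp [hgdef, hxa, this]
        · rw [if_neg hc]
          have : ∃ x, (x ∈ A ∧ c x ≠ some i) ∨ (x ∉ A ∧ c x = some i) := by
            by_contra hall
            push_neg at hall
            apply hc
            ext x
            simp only [hfibdef, mem_filter, mem_univ, true_and]
            have := hall x
            constructor
            · intro hcx
              by_contra hxa
              exact (this.2 hxa) hcx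
            · intro hxa
              exact this.1 hxa
          obtain ⟨x, hor⟩ := this
          apply Finset.prod_eq_zero (Finset.mem_univ x)
          rcases hor with ⟨h1, h2⟩ | ⟨h1, h2⟩ <;> simp [hgdef, h1, h2]
      calc p i ^ A.card * (1 - p i) ^ (n - A.card)
          = ∏ x : Fin n, (if x ∈ A then p i else 1 - p i) := by
            have hsplit : ∏ x : Fin n, (if x ∈ A then p i else 1 - p i)
                = (∏ _x ∈ A, p i) * ∏ _x ∈ Aᶜ, (1 - p i) := by
              rw [← Finset.prod_mul_prod_compl A]
              congr 1
              · exact Finset.prod_congr rfl (by intro x hx; simp [hx])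
              · exact Finset.prod_congr rfl
                  (by intro x hx; simp [Finset.mem_compl.mp hx])
            rw [hsplit, Finset.prod_const, Finset.prod_const, Finset.card_compl,
              Fintype.card_fin]
        _ = ∏ x : Fin n, ∑ o : Option (Fin t), g x o := by
            apply Finset.prod_congr rfl; intro x _; rw [hgsum]
        _ = ∑ c : Fin n → Option (Fin t), ∏ x, g x (c x) := Fintype.prod_sum g
        _ = ∑ c : Fin n → Option (Fin t), (if fib c i = A then W c else 0) := by
            apply Finset.sum_congr rfl; intro c _; exact hgprod c
    rw [biasedMu, Finset.sum_congr rfl hA, Finset.sum_comm]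
    apply Finset.sum_congr rfl
    intro c _
    rw [Finset.sum_ite_eq (F i) (fib c i) (fun _ => W c)]
  -- combine
  rw [Finset.sum_congr rfl (fun i _ => key i), Finset.sum_comm]
  have hbound : ∀ c : Fin n → Option (Fin t),
      ∑ i : Fin t, (if fib c i ∈ F i then W c else 0) ≤ ((t : ℝ) - 1) * W c := by
    intro c
    have : ∃ j, fib c j ∉ F j := by
      by_contra hall
      push_neg at hall
      exact hcross ⟨fib c, hall, hfibdisj c⟩
    obtain ⟨j, hj⟩ := this
    calc ∑ i : Fin t, (if fib c i ∈ F i then W c else 0)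
        ≤ ∑ i : Fin t, (if i = j then 0 else W c) := by
          apply Finset.sum_le_sum
          intro i _
          by_cases hij : i = j
          · subst hij; simp [hj]
          · rw [if_neg hij]
            by_cases h : fib c i ∈ F i <;> simp [h, hW0 c]
      _ = ((t : ℝ) - 1) * W c := by
          have : ∀ i : Fin t, (if i = j then 0 else W c) = W c - (if i = j then W c else 0) := by
            intro i; by_cases h : i = j <;> simp [h]
          rw [Finset.sum_congr rfl (fun i _ => this i), Finset.sum_sub_distrib,
            Finset.sum_const, Finset.sum_ite_eq' univ j (fun _ => W c)]
          simp [sub_mul, mul_comm]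
  calc ∑ c : Fin n → Option (Fin t), ∑ i : Fin t, (if fib c i ∈ F i then W c else 0)
      ≤ ∑ c : Fin n → Option (Fin t), ((t : ℝ) - 1) * W c :=
        Finset.sum_le_sum fun c _ => hbound c
    _ = (t : ℝ) - 1 := by rw [← Finset.mul_sum, hWsum, mul_one]
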